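/- Let k be an algebraically closed field and I, J ideals of k[x₁,...,xₙ]. Then the variety of the saturation I : J^∞ equals the Zariski closure of V(I) \ V(J). -/

import Mathlib

open MvPolynomial

lemma zeroLocus_radical_aux {k : Type*} [Field k] {n : ℕ} (I : Ideal (MvPolynomial (Fin n) k)) :
    MvPolynomial.zeroLocus k I.radical = MvPolynomial.zeroLocus k I := by
  apply le_antisymm
  · exact MvPolynomial.zeroLocus_anti_mono Ideal.le_radical
  · intro x hx p hp
    obtain ⟨m, hm⟩ := hp
    have h0 : (aeval x) p ^ m = 0 := by rw [← map_pow]; exact hx _ hm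
    exact (pow_eq_zero_iff'.mp h0).1

/-- Over an algebraically closed field, the variety of the saturation `I : J^∞`
is the Zariski closure of `V(I) \ V(J)`. -/
theorem zeroLocus_saturation {k : Type*} [Field k] [IsAlgClosed k] {n : ℕ}
    (I J : Ideal (MvPolynomial (Fin n) k)) :
    MvPolynomial.zeroLocus k (⨆ m : ℕ, I.colon ((J ^ m : Ideal (MvPolynomial (Fin n) k)) : Set (MvPolynomial (Fin n) k))) =
      MvPolynomial.zeroLocus k (MvPolynomial.vanishingIdeal k
        (MvPolynomial.zeroLocus k I \ MvPolynomial.zeroLocus k J)) := by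
  apply le_antisymm
  · -- V(sat) ⊆ closure: show vanishingIdeal (V I \ V J) ≤ radical (⨆ colon)
    have key : MvPolynomial.vanishingIdeal k
        (MvPolynomial.zeroLocus k I \ MvPolynomial.zeroLocus k J) ≤
        (⨆ m : ℕ, I.colon ((J ^ m : Ideal (MvPolynomial (Fin n) k)) : Set (MvPolynomial (Fin n) k))).radical := by
      intro g hg
      -- for each h ∈ J, g * h ∈ radical I
      have hmul : Ideal.span {g} * J ≤ I.radical := by
        rw [Ideal.span_singleton_mul_le_iff]
        intro h hh
        rw [← MvPolynomial.vanishingIdeal_zeroLocus_eq_radical (K := k)]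
        intro x hx
        by_cases hxJ : x ∈ MvPolynomial.zeroLocus k J
        · simp; exact Or.inr (hxJ h hh)
        · have := hg x ⟨hx, hxJ⟩
          simp; exact Or.inl this
      obtain ⟨t, ht⟩ := Ideal.exists_pow_le_of_le_radical_of_fg hmul
        (IsNoetherian.noetherian _)
      refine ⟨t, ?_⟩
      have : g ^ t ∈ I.colon ((J ^ t : Ideal (MvPolynomial (Fin n) k)) : Set (MvPolynomial (Fin n) k)) := by
        rw [Submodule.mem_colon]
        intro h hh
        have : g ^ t * h ∈ (Ideal.span {g} * J) ^ t := by
          rw [mul_pow]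
          exact Ideal.mul_mem_mul (Ideal.pow_mem_pow (Ideal.mem_span_singleton_self g) t) hh
        exact ht this
      exact Ideal.mem_iSup_of_mem t this
    calc MvPolynomial.zeroLocus k (⨆ m : ℕ, I.colon ((J ^ m : Ideal (MvPolynomial (Fin n) k)) : Set (MvPolynomial (Fin n) k)))
        = MvPolynomial.zeroLocus k (⨆ m : ℕ, I.colon ((J ^ m : Ideal (MvPolynomial (Fin n) k)) : Set (MvPolynomial (Fin n) k))).radical :=
          (zeroLocus_radical_aux _).symm
      _ ≤ _ := MvPolynomial.zeroLocus_anti_mono key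
  · -- closure ⊆ V(sat): show ⨆ colon ≤ vanishingIdeal
    apply MvPolynomial.zeroLocus_anti_mono
    rw [iSup_le_iff]
    intro m f hf x hx
    obtain ⟨hxI, hxJ⟩ := hx
    rw [MvPolynomial.mem_zeroLocus_iff] at hxJ
    push_neg at hxJ
    obtain ⟨h, hhJ, hhx⟩ := hxJ
    have : f * h ^ m ∈ I := Submodule.mem_colon.mp hf _ (Ideal.pow_mem_pow hhJ m)
    have h0 : eval x f * eval x h ^ m = 0 := by
      have := hxI _ this
      simpa using this
    rcases mul_eq_zero.mp h0 with h1 | h1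
    · exact h1
    · exact absurd (pow_eq_zero_iff'.mp h1).1 hhx
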